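/- arXiv:2106.01734 — 2 statements merged into one kernel-verified Lean document; each statement's English description precedes it below -/
import Mathlib

section
/- If the index type I is projective, then for every family of predicates φ i : A i → Prop indexed by I, the indexed infimum ⨅ᵢ φ is instance equivalent to the simpler predicate ⨅'ᵢ φ on the product Π i : I, A i defined by (⨅'ᵢ φ)(f) ↔ ∃ i, φ i (f i). -/
universe u

/-- Instance reducibility. -/
def InstRed {A : Type u} {B : Type u} (φ : A → Prop) (ψ : B → Prop) : Prop :=
  ∀ x : A, ∃ y : B, ψ y → φ x

/-- Instance equivalence. -/
def InstEquiv {A : Type u} {B : Type u} (φ : A → Prop) (ψ : B → Prop) : Prop :=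
  InstRed φ ψ ∧ InstRed ψ φ

/-- The indexed infimum, defined on the product of families of inhabited subsets. -/
def piInf {I : Type u} {A : I → Type u} (φ : ∀ i, A i → Prop) :
    (∀ i : I, {s : Set (A i) // s.Nonempty}) → Prop :=
  fun f => ∃ i, ∃ x ∈ (f i).val, φ i x

/-- The simpler indexed infimum, defined on the product type. -/
def piInf' {I : Type u} {A : I → Type u} (φ : ∀ i, A i → Prop) :
    (∀ i : I, A i) → Prop :=
  fun f => ∃ i, φ i (f i)

/-- A type is projective when every total relation on it has a choice function. -/
def Projective (I : Type u) : Prop :=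
  ∀ (X : Type u) (R : I → X → Prop), (∀ i, ∃ x, R i x) → ∃ f : I → X, ∀ i, R i (f i)

theorem piInf_equiv_piInf'_of_projective {I : Type u} {A : I → Type u}
    (hI : Projective I) (φ : ∀ i, A i → Prop) :
    InstEquiv (piInf φ) (piInf' φ) := by
  constructor
  · intro f
    obtain ⟨g, hg⟩ := hI (Σ j, A j)
      (fun i x => ∃ h : x.1 = i, h ▸ x.2 ∈ (f i).val)
      (fun i => by
        obtain ⟨x, hx⟩ := (f i).2
        exact ⟨⟨i, x⟩, rfl, hx⟩)
    refine ⟨fun i => (hg i).choose ▸ (g i).2, ?_⟩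
    rintro ⟨i, hφ⟩
    exact ⟨i, _, (hg i).choose_spec, hφ⟩
  · intro g
    refine ⟨fun i => ⟨{g i}, ⟨g i, rfl⟩⟩, ?_⟩
    rintro ⟨i, x, hx, hφ⟩
    cases hx
    exact ⟨i, hφ⟩
end

section
/- Let φ : A → Prop and ψ : B → Prop be predicates and I, J types. Then: (1) if I is nonempty then φ ≤ᵢ φ^I; (2) if I is a retract of J (there are r : J → I and s : I → J with r ∘ s = id) then φ^I ≤ᵢ φ^J; (3) if I is projective and φ ≤ᵢ ψ then φ^I ≤ᵢ ψ^I. -/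
universe u

/-- The `I`-parameterization of a predicate. -/
def param {A : Type u} (φ : A → Prop) (I : Type u) : (I → A) → Prop :=
  fun f => ∀ i : I, φ (f i)

theorem param_properties {A B : Type u} (φ : A → Prop) (ψ : B → Prop) (I J : Type u) :
    (Nonempty I → InstRed φ (param φ I)) ∧
    ((∃ (r : J → I) (s : I → J), r ∘ s = id) → InstRed (param φ I) (param φ J)) ∧
    (Projective I → InstRed φ ψ → InstRed (param φ I) (param ψ I)) := by
  refine ⟨fun ⟨i0⟩ x => ⟨fun _ => x, fun h => h i0⟩, fun ⟨r, s, hrs⟩ f => ⟨f ∘ r, fun h i => ?_⟩, fun hproj hred f => ?_⟩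
  · have := h (s i)
    have e : r (s i) = i := congrFun hrs i
    simpa only [Function.comp_apply, e] using this
  · obtain ⟨g, hg⟩ := hproj B (fun i y => ψ y → φ (f i)) (fun i => hred (f i))
    exact ⟨g, fun h i => hg i (h i)⟩
end
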